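/- Let F be a satisfiable finite set of atomic comparisons over V, and let u and v be terms occurring in F. If F entails u ≤ v, then there exists a chain from u to v in F⁺. -/
import Mathlib


namespace QC

/-- A term is a variable in `V` or a real constant. -/
inductive Term (V : Type) where
  | var : V → Term V
  | const : ℝ → Term V

/-- The comparison relations `<, ≤, =, ≠`. -/
inductive Rel where
  | lt | le | eq | ne

/-- A comparison between two terms.  (`x ≥ c` is represented as `c ≤ x`, etc.) -/
structure Comp (V : Type) where
  rel : Rel
  lhs : Term V
  rhs : Term V

def Term.eval {V : Type} (σ : V → ℝ) : Term V → ℝ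
  | .var x => σ x
  | .const c => c

def Rel.holds : Rel → ℝ → ℝ → Prop
  | .lt => fun a b => a < b
  | .le => fun a b => a ≤ b
  | .eq => fun a b => a = b
  | .ne => fun a b => a ≠ b

/-- An assignment `σ : V → ℝ` satisfies a comparison. -/
def Comp.holds {V : Type} (a : Comp V) (σ : V → ℝ) : Prop :=
  a.rel.holds (a.lhs.eval σ) (a.rhs.eval σ)

def Term.isVar {V : Type} : Term V → Prop
  | .var _ => True
  | .const _ => False

/-- An atomic comparison: at least one side is a variable. -/
def IsAC {V : Type} (a : Comp V) : Prop := a.lhs.isVar ∨ a.rhs.isVar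

/-- `σ` satisfies every comparison in the finite set `F`. -/
def Sat {V : Type} (F : Finset (Comp V)) (σ : V → ℝ) : Prop := ∀ a ∈ F, a.holds σ

/-- The real constant `c` occurs in `F`. -/
def ConstOccurs {V : Type} (F : Finset (Comp V)) (c : ℝ) : Prop :=
  ∃ a ∈ F, a.lhs = Term.const c ∨ a.rhs = Term.const c

/-- The term `t` occurs in `F`. -/
def TermOccurs {V : Type} (F : Finset (Comp V)) (t : Term V) : Prop :=
  ∃ a ∈ F, a.lhs = t ∨ a.rhs = t

/-- `F⁺`: `F` together with `c < c'` for every pair of constants `c < c'` occurring in `F`. -/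
def Fplus {V : Type} (F : Finset (Comp V)) : Set (Comp V) :=
  (↑F : Set (Comp V)) ∪
    {a : Comp V | ∃ c c' : ℝ, c < c' ∧ ConstOccurs F c ∧ ConstOccurs F c' ∧
      a = ⟨Rel.lt, Term.const c, Term.const c'⟩}

/-- A chain link from `s` to `t` in `Fp`: `Fp` contains `s ≤ t`, `s < t`, or an
equality between `s` and `t` (in either orientation). -/
def Link {V : Type} (Fp : Set (Comp V)) (s t : Term V) : Prop :=
  (⟨Rel.le, s, t⟩ : Comp V) ∈ Fp ∨ (⟨Rel.lt, s, t⟩ : Comp V) ∈ Fp ∨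
  (⟨Rel.eq, s, t⟩ : Comp V) ∈ Fp ∨ (⟨Rel.eq, t, s⟩ : Comp V) ∈ Fp

/-- A non-strict chain link: `s ≤ t` or an equality between `s` and `t` (either orientation). -/
def NSLink {V : Type} (Fp : Set (Comp V)) (s t : Term V) : Prop :=
  (⟨Rel.le, s, t⟩ : Comp V) ∈ Fp ∨
  (⟨Rel.eq, s, t⟩ : Comp V) ∈ Fp ∨ (⟨Rel.eq, t, s⟩ : Comp V) ∈ Fp

/-- `t 0, …, t n` is a chain from `u` to `v` in `Fp`. -/
def IsChainSeq {V : Type} (Fp : Set (Comp V)) (u v : Term V) (n : ℕ)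
    (t : Fin (n + 1) → Term V) : Prop :=
  t 0 = u ∧ t (Fin.last n) = v ∧ ∀ i : Fin n, Link Fp (t i.castSucc) (t i.succ)

/-- There is a chain from `u` to `v` in `Fp`. -/
def ChainFrom {V : Type} (Fp : Set (Comp V)) (u v : Term V) : Prop :=
  ∃ (n : ℕ) (t : Fin (n + 1) → Term V), IsChainSeq Fp u v n t


set_option maxHeartbeats 1000000 in
lemma exists_val {α : Type} (T : Finset α) (r : α → α → Prop)
    (hrefl : ∀ a, r a a) (htrans : ∀ a b c : α, r a b → r b c → r a c)
    (C : Finset ℝ) (cst : ℝ → α)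
    (hCT : ∀ c ∈ C, cst c ∈ T)
    (hCup : ∀ c ∈ C, ∀ c' ∈ C, c < c' → r (cst c) (cst c'))
    (hCdown : ∀ c ∈ C, ∀ c' ∈ C, c < c' → ¬ r (cst c') (cst c)) :
    ∃ val : α → ℝ, (∀ c ∈ C, val (cst c) = c) ∧
      (∀ s ∈ T, ∀ t ∈ T, r s t → val s ≤ val t) ∧
      (∀ s ∈ T, ∀ t ∈ T, val s = val t → r s t ∧ r t s) := by
  classical
  set n := T.card with hn
  set idx : α → ℕ := fun t => if h : t ∈ T then ((T.equivFin ⟨t, h⟩ : Fin n) : ℕ) else 0 with hidx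
  have hidx_lt : ∀ t ∈ T, idx t < n := by
    intro t ht; simp only [hidx, dif_pos ht]; exact (T.equivFin ⟨t, ht⟩).isLt
  have hidx_inj : ∀ s ∈ T, ∀ t ∈ T, idx s = idx t → s = t := by
    intro s hs t ht h
    simp only [hidx, dif_pos hs, dif_pos ht] at h
    have := T.equivFin.injective (Fin.val_injective h)
    exact congrArg Subtype.val this
  set cls : α → Finset α := fun t => T.filter (fun s => r s t ∧ r t s) with hcls
  set down : α → Finset α := fun t => T.filter (fun s => r s t) with hdown
  set d : α → ℕ := fun t => (down t).card with hd
  set m : α → ℕ := fun t => if h : (cls t).Nonempty then ((cls t).image idx).min' (h.image idx) else 0 with hm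
  have hmem_cls : ∀ t ∈ T, t ∈ cls t := by
    intro t ht; simp [hcls, ht, hrefl t]
  have hcls_inv : ∀ s t : α, r s t → r t s → cls s = cls t := by
    intro s t h1 h2
    ext w; simp only [hcls, Finset.mem_filter]
    constructor
    · rintro ⟨hw, hws, hsw⟩; exact ⟨hw, htrans _ _ _ hws h1, htrans _ _ _ h2 hsw⟩
    · rintro ⟨hw, hwt, htw⟩; exact ⟨hw, htrans _ _ _ hwt h2, htrans _ _ _ h1 htw⟩
  have hm_inv : ∀ s t : α, r s t → r t s → m s = m t := by
    intro s t h1 h2; simp only [hm, hcls_inv s t h1 h2]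
  have hm_lt : ∀ t ∈ T, m t < n := by
    intro t ht
    have hne : (cls t).Nonempty := ⟨t, hmem_cls t ht⟩
    simp only [hm, dif_pos hne]
    obtain ⟨w, hw, hweq⟩ := Finset.mem_image.1 (Finset.min'_mem _ (hne.image idx))
    rw [← hweq]
    exact hidx_lt w (Finset.mem_filter.1 hw).1
  have hm_inj : ∀ s ∈ T, ∀ t ∈ T, m s = m t → r s t ∧ r t s := by
    intro s hs t ht h
    have hnes : (cls s).Nonempty := ⟨s, hmem_cls s hs⟩
    have hnet : (cls t).Nonempty := ⟨t, hmem_cls t ht⟩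
    simp only [hm, dif_pos hnes, dif_pos hnet] at h
    obtain ⟨w, hw, hweq⟩ := Finset.mem_image.1 (Finset.min'_mem _ (hnes.image idx))
    obtain ⟨w', hw', hweq'⟩ := Finset.mem_image.1 (Finset.min'_mem _ (hnet.image idx))
    have hww : w = w' := by
      apply hidx_inj w (Finset.mem_filter.1 hw).1 w' (Finset.mem_filter.1 hw').1
      rw [hweq, hweq', h]
    obtain ⟨-, hws, hsw⟩ := Finset.mem_filter.1 hw
    obtain ⟨-, hwt, htw⟩ := Finset.mem_filter.1 hw'
    subst hww
    exact ⟨htrans _ _ _ hsw hwt, htrans _ _ _ htw hws⟩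
  have hdown_mono : ∀ s t : α, r s t → down s ⊆ down t := by
    intro s t h w hw
    obtain ⟨hwT, hws⟩ := Finset.mem_filter.1 hw
    exact Finset.mem_filter.2 ⟨hwT, htrans _ _ _ hws h⟩
  set K : α → ℕ := fun t => d t * n + m t with hK
  have hK_mono : ∀ s ∈ T, ∀ t ∈ T, r s t → K s ≤ K t := by
    intro s hs t ht h
    have hdle : d s ≤ d t := Finset.card_le_card (hdown_mono s t h)
    rcases eq_or_lt_of_le hdle with hde | hdlt
    · have hset : down s = down t :=
        Finset.eq_of_subset_of_card_le (hdown_mono s t h) (le_of_eq hde.symm)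
      have hts : r t s := by
        have : t ∈ down s := hset ▸ Finset.mem_filter.2 ⟨ht, hrefl t⟩
        exact (Finset.mem_filter.1 this).2
      simp only [hK, hde, hm_inv s t h hts, le_refl]
    · have h1 : m s < n := hm_lt s hs
      have h2 : (d s + 1) * n ≤ d t * n := Nat.mul_le_mul_right n hdlt
      simp only [hK]; nlinarith [Nat.zero_le (m t)]
  have hK_inj : ∀ s ∈ T, ∀ t ∈ T, K s = K t → r s t ∧ r t s := by
    intro s hs t ht h
    have hds : m s < n := hm_lt s hs
    have hdt : m t < n := hm_lt t ht
    have hde : d s = d t := by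
      rcases lt_trichotomy (d s) (d t) with hlt | he | hgt
      · exfalso
        have h2 : (d s + 1) * n ≤ d t * n := Nat.mul_le_mul_right n hlt
        simp only [hK] at h; nlinarith [Nat.zero_le (m t)]
      · exact he
      · exfalso
        have h2 : (d t + 1) * n ≤ d s * n := Nat.mul_le_mul_right n hgt
        simp only [hK] at h; nlinarith [Nat.zero_le (m s)]
    have hme : m s = m t := by simp only [hK, hde] at h; omega
    exact hm_inj s hs t ht hme
  -- real-valued part
  set N : ℝ := ((n * n + n + 1 : ℕ) : ℝ) with hN
  have hN_pos : (0 : ℝ) < N := by rw [hN]; exact_mod_cast Nat.succ_pos _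
  set θ : α → ℝ := fun t => ((K t : ℝ) + 1) / N with hθ
  have hθ_pos : ∀ t, 0 < θ t := by
    intro t
    apply div_pos _ hN_pos
    have : (0:ℝ) ≤ (K t : ℝ) := Nat.cast_nonneg _
    linarith
  have hθ_lt : ∀ t ∈ T, θ t < 1 := by
    intro t ht
    have h1 : d t ≤ n := Finset.card_filter_le _ _
    have h2 : m t < n := hm_lt t ht
    have h3 : K t + 1 < n * n + n + 1 := by
      have : d t * n ≤ n * n := Nat.mul_le_mul_right n h1
      simp only [hK]; omega
    rw [hθ, div_lt_one hN_pos, hN]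
    exact_mod_cast h3
  have hθ_mono : ∀ s t : α, K s ≤ K t → θ s ≤ θ t := by
    intro s t h
    simp only [hθ]
    have h1 : (K s : ℝ) + 1 ≤ (K t : ℝ) + 1 := by exact_mod_cast Nat.succ_le_succ h
    exact div_le_div_of_nonneg_right h1 hN_pos.le
  have hθ_inj : ∀ s t : α, θ s = θ t → K s = K t := by
    intro s t h
    simp only [hθ] at h
    rw [div_eq_div_iff hN_pos.ne' hN_pos.ne'] at h
    have h2 : (K s : ℝ) + 1 = (K t : ℝ) + 1 := mul_right_cancel₀ hN_pos.ne' h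
    have h3 : K s + 1 = K t + 1 := by exact_mod_cast h2
    omega
  -- constants below t
  set Cd : α → Finset ℝ := fun t => C.filter (fun c => r (cst c) t) with hCd
  set B0 : ℝ := (if h : C.Nonempty then C.min' h else 0) - 1 with hB0
  have hB0_lt : ∀ c ∈ C, B0 < c := by
    intro c hc
    have hne : C.Nonempty := ⟨c, hc⟩
    rw [hB0, dif_pos hne]
    have := Finset.min'_le C c hc
    linarith
  set base : α → ℝ := fun t => if h : (Cd t).Nonempty then (Cd t).max' h else B0 with hbase
  have hbase_mem : ∀ t, (Cd t).Nonempty → base t ∈ Cd t := by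
    intro t h; simp only [hbase, dif_pos h]; exact Finset.max'_mem _ h
  have hbase_ub : ∀ t, ∀ c ∈ Cd t, c ≤ base t := by
    intro t c hc
    have hne : (Cd t).Nonempty := ⟨c, hc⟩
    simp only [hbase, dif_pos hne]; exact Finset.le_max' _ c hc
  have hbase_lb : ∀ t, B0 ≤ base t := by
    intro t
    by_cases h : (Cd t).Nonempty
    · exact (hB0_lt _ (Finset.mem_filter.1 (hbase_mem t h)).1).le
    · simp [hbase, dif_neg h]
  have hCd_mono : ∀ s t : α, r s t → Cd s ⊆ Cd t := by
    intro s t h c hc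
    obtain ⟨hcC, hcr⟩ := Finset.mem_filter.1 hc
    exact Finset.mem_filter.2 ⟨hcC, htrans _ _ _ hcr h⟩
  set nxt : ℝ → ℝ := fun b => if h : (C.filter (fun c => b < c)).Nonempty
    then (C.filter (fun c => b < c)).min' h else b + 1 with hnxt
  have hnxt_gt : ∀ b : ℝ, b < nxt b := by
    intro b
    by_cases h : (C.filter (fun c => b < c)).Nonempty
    · simp only [hnxt, dif_pos h]
      exact (Finset.mem_filter.1 (Finset.min'_mem _ h)).2
    · simp only [hnxt, dif_neg h]; linarith
  have hnxt_le : ∀ b : ℝ, ∀ c ∈ C, b < c → nxt b ≤ c := by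
    intro b c hc h
    have hmem : c ∈ C.filter (fun c => b < c) := Finset.mem_filter.2 ⟨hc, h⟩
    have hne : (C.filter (fun c => b < c)).Nonempty := ⟨c, hmem⟩
    simp only [hnxt, dif_pos hne]
    exact Finset.min'_le _ c hmem
  have hgap_noC : ∀ b : ℝ, ∀ c ∈ C, b < c → c < nxt b → False := by
    intro b c hc h1 h2
    exact absurd (hnxt_le b c hc h1) (not_le.2 h2)
  set pinned : α → Prop := fun t => ∃ c, c ∈ C ∧ r (cst c) t ∧ r t (cst c) with hpinned
  have hpin_unique : ∀ t : α, ∀ c ∈ C, ∀ c' ∈ C,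
      r (cst c) t → r t (cst c) → r (cst c') t → r t (cst c') → c = c' := by
    intro t c hc c' hc' h1 h2 h3 h4
    rcases lt_trichotomy c c' with h | h | h
    · exact absurd (htrans _ _ _ h3 h2) (hCdown c hc c' hc' h)
    · exact h
    · exact absurd (htrans _ _ _ h1 h4) (hCdown c' hc' c hc h)
  set val : α → ℝ := fun t => if h : pinned t
    then h.choose
    else base t + (nxt (base t) - base t) * θ t with hval
  have hval_pin : ∀ t : α, ∀ c ∈ C, r (cst c) t → r t (cst c) → val t = c := by
    intro t c hc h1 h2
    have hp : pinned t := ⟨c, hc, h1, h2⟩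
    simp only [hval, dif_pos hp]
    obtain ⟨hc', h1', h2'⟩ := hp.choose_spec
    exact hpin_unique t _ hc' c hc h1' h2' h1 h2
  have hval_lb : ∀ t ∈ T, ¬ pinned t → base t < val t := by
    intro t ht hp
    simp only [hval, dif_neg hp]
    have h1 : 0 < nxt (base t) - base t := by linarith [hnxt_gt (base t)]
    nlinarith [hθ_pos t]
  have hval_ub : ∀ t ∈ T, ¬ pinned t → val t < nxt (base t) := by
    intro t ht hp
    simp only [hval, dif_neg hp]
    have h1 : 0 < nxt (base t) - base t := by linarith [hnxt_gt (base t)]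
    nlinarith [hθ_lt t ht, hθ_pos t]
  -- base is monotone, and strict base inequality gives strict val inequality
  have hbase_mono : ∀ s t : α, r s t → base s ≤ base t := by
    intro s t h
    by_cases hs : (Cd s).Nonempty
    · exact hbase_ub t _ (hCd_mono s t h (hbase_mem s hs))
    · simp only [hbase, dif_neg hs]; exact hbase_lb t
  have hbase_strict : ∀ s ∈ T, ∀ t ∈ T, ¬ pinned s → ¬ pinned t →
      base s < base t → val s < val t := by
    intro s hs t ht hps hpt hlt
    have htne : (Cd t).Nonempty := by
      by_contra hne
      have : base t = B0 := by simp only [hbase, dif_neg hne]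
      have := hbase_lb s
      linarith
    have hbtC : base t ∈ C := (Finset.mem_filter.1 (hbase_mem t htne)).1
    have h1 : nxt (base s) ≤ base t := hnxt_le _ _ hbtC hlt
    have h2 := hval_ub s hs hps
    have h3 := hval_lb t ht hpt
    linarith
  -- the three desired properties
  refine ⟨val, ?_, ?_, ?_⟩
  · intro c hc
    exact hval_pin (cst c) c hc (hrefl _) (hrefl _)
  · -- monotone
    intro s hs t ht h
    by_cases hps : pinned s
    · obtain ⟨c, hc, h1, h2⟩ := hps
      rw [hval_pin s c hc h1 h2]
      by_cases hpt : pinned t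
      · obtain ⟨c', hc', h3, h4⟩ := hpt
        rw [hval_pin t c' hc' h3 h4]
        by_contra hcon
        push_neg at hcon
        exact hCdown c' hc' c hc hcon
          (htrans _ _ _ h1 (htrans _ _ _ h h4))
      · have hcCd : c ∈ Cd t := Finset.mem_filter.2 ⟨hc, htrans _ _ _ h1 h⟩
        have := hbase_ub t c hcCd
        linarith [hval_lb t ht hpt]
    · by_cases hpt : pinned t
      · obtain ⟨c, hc, h1, h2⟩ := hpt
        rw [hval_pin t c hc h1 h2]
        -- claim base s < c
        have hblt : base s < c := by
          by_contra hge
          push_neg at hge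
          have hsne : (Cd s).Nonempty := by
            by_contra hne
            have : base s = B0 := by simp only [hbase, dif_neg hne]
            have := hB0_lt c hc
            linarith
          have hbsC := hbase_mem s hsne
          obtain ⟨hbsC', hrbs⟩ := Finset.mem_filter.1 hbsC
          have hsb : r s (cst c) := htrans _ _ _ h h2
          rcases lt_or_eq_of_le hge with hgt | heq
          · exact hCdown c hc (base s) hbsC' hgt (htrans _ _ _ hrbs hsb)
          · exact hps ⟨c, hc, heq ▸ hrbs, hsb⟩
        have := hnxt_le (base s) c hc hblt
        linarith [hval_ub s hs hps]
      · have hble := hbase_mono s t h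
        rcases lt_or_eq_of_le hble with hblt | hbeq
        · exact (hbase_strict s hs t ht hps hpt hblt).le
        · simp only [hval, dif_neg hps, dif_neg hpt, hbeq]
          have h1 : 0 < nxt (base t) - base t := by linarith [hnxt_gt (base t)]
          have h2 : θ s ≤ θ t := hθ_mono s t (hK_mono s hs t ht h)
          nlinarith
  · -- injective on classes
    intro s hs t ht h
    by_cases hps : pinned s
    · obtain ⟨c, hc, h1, h2⟩ := hps
      have hvs := hval_pin s c hc h1 h2
      by_cases hpt : pinned t
      · obtain ⟨c', hc', h3, h4⟩ := hpt
        have hvt := hval_pin t c' hc' h3 h4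
        have : c = c' := by rw [← hvs, ← hvt, h]
        subst this
        exact ⟨htrans _ _ _ h2 h3, htrans _ _ _ h4 h1⟩
      · exfalso
        have h5 := hval_lb t ht hpt
        have h6 := hval_ub t ht hpt
        rw [← h, hvs] at h5 h6
        exact hgap_noC (base t) c hc h5 h6
    · by_cases hpt : pinned t
      · exfalso
        obtain ⟨c, hc, h1, h2⟩ := hpt
        have hvt := hval_pin t c hc h1 h2
        have h5 := hval_lb s hs hps
        have h6 := hval_ub s hs hps
        rw [h, hvt] at h5 h6
        exact hgap_noC (base s) c hc h5 h6
      · have hbeq : base s = base t := by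
          rcases lt_trichotomy (base s) (base t) with hlt | heq | hgt
          · exact absurd h (ne_of_lt (hbase_strict s hs t ht hps hpt hlt))
          · exact heq
          · exact absurd h.symm (ne_of_lt (hbase_strict t ht s hs hpt hps hgt))
        have hKeq : K s = K t := by
          apply hθ_inj
          simp only [hval, dif_neg hps, dif_neg hpt, hbeq] at h
          have h1 : 0 < nxt (base t) - base t := by linarith [hnxt_gt (base t)]
          have := mul_left_cancel₀ (ne_of_gt h1) (by linarith : (nxt (base t) - base t) * θ s = (nxt (base t) - base t) * θ t)
          exact this
        exact hK_inj s hs t ht hKeq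


lemma reflTransGen_chainFrom {V : Type} (Fp : Set (Comp V)) (s t : Term V)
    (h : Relation.ReflTransGen (Link Fp) s t) : ChainFrom Fp s t := by
  induction h with
  | refl => exact ⟨0, fun _ => s, rfl, rfl, fun i => i.elim0⟩
  | @tail b c hb hbc ih =>
    obtain ⟨n, f, h0, hl, hlk⟩ := ih
    refine ⟨n + 1, Fin.snoc f c, ?_, ?_, ?_⟩
    · rw [show (0 : Fin (n + 2)) = Fin.castSucc 0 from rfl, Fin.snoc_castSucc]
      exact h0
    · exact Fin.snoc_last _ _
    · intro i
      refine Fin.lastCases ?_ ?_ i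
      · rw [Fin.succ_last, Fin.snoc_last, Fin.snoc_castSucc, hl]
        exact hbc
      · intro j
        rw [Fin.succ_castSucc, Fin.snoc_castSucc, Fin.snoc_castSucc]
        exact hlk j

lemma link_eval {V : Type} (F : Finset (Comp V)) (σ₀ : V → ℝ) (hσ₀ : Sat F σ₀)
    (s t : Term V) (hL : Link (Fplus F) s t) : s.eval σ₀ ≤ t.eval σ₀ := by
  have hmem : ∀ a : Comp V, a ∈ Fplus F →
      a ∈ F ∨ ∃ c c' : ℝ, c < c' ∧ a = ⟨Rel.lt, Term.const c, Term.const c'⟩ := by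
    intro a ha
    rcases ha with ha | ⟨c, c', h1, _, _, h4⟩
    · left; exact ha
    · right; exact ⟨c, c', h1, h4⟩
  rcases hL with h | h | h | h
  · rcases hmem _ h with hF | ⟨c, c', h1, heq⟩
    · exact hσ₀ _ hF
    · simp at heq
  · rcases hmem _ h with hF | ⟨c, c', h1, heq⟩
    · exact (hσ₀ _ hF :  s.eval σ₀ < t.eval σ₀).le
    · injection heq with e1 e2 e3
      subst e2; subst e3
      simp only [Term.eval]
      exact h1.le
  · rcases hmem _ h with hF | ⟨c, c', h1, heq⟩
    · exact (hσ₀ _ hF : s.eval σ₀ = t.eval σ₀).le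
    · simp at heq
  · rcases hmem _ h with hF | ⟨c, c', h1, heq⟩
    · exact (hσ₀ _ hF : t.eval σ₀ = s.eval σ₀).ge
    · simp at heq

lemma rstar_eval {V : Type} (F : Finset (Comp V)) (σ₀ : V → ℝ) (hσ₀ : Sat F σ₀)
    (s t : Term V) (h : Relation.ReflTransGen (Link (Fplus F)) s t) :
    s.eval σ₀ ≤ t.eval σ₀ := by
  induction h with
  | refl => exact le_refl _
  | tail hb hbc ih => exact ih.trans (link_eval F σ₀ hσ₀ _ _ hbc)

/-- clause 2 of the lemma on derivations from sets of ACs: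
if a satisfiable finite set `F` of atomic comparisons entails `u ≤ v` for terms
`u, v` occurring in `F`, then there is a chain from `u` to `v` in `F⁺`. -/
theorem stmt0 {V : Type} (F : Finset (Comp V))
    (hAC : ∀ a ∈ F, IsAC a)
    (hsat : ∃ σ : V → ℝ, Sat F σ)
    (u v : Term V)
    (hu : TermOccurs F u) (hv : TermOccurs F v)
    (hent : ∀ σ : V → ℝ, Sat F σ → u.eval σ ≤ v.eval σ) :
    ChainFrom (Fplus F) u v := by
  classical
  by_contra hnc
  obtain ⟨σ₀, hσ₀⟩ := hsat
  have hnuv : ¬ Relation.ReflTransGen (Link (Fplus F)) u v :=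
    fun h => hnc (reflTransGen_chainFrom _ _ _ h)
  -- decomposition of the extended relation
  have hdec : ∀ s t : Term V,
      Relation.ReflTransGen (fun a b => Link (Fplus F) a b ∨ (a = v ∧ b = u)) s t →
      Relation.ReflTransGen (Link (Fplus F)) s t ∨
        (Relation.ReflTransGen (Link (Fplus F)) s v ∧
         Relation.ReflTransGen (Link (Fplus F)) u t) := by
    intro s t h
    induction h with
    | refl => exact Or.inl Relation.ReflTransGen.refl
    | @tail b c hb hbc ih =>
      rcases hbc with hL | ⟨hbv, hcu⟩
      · rcases ih with h1 | ⟨h1, h2⟩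
        · exact Or.inl (h1.tail hL)
        · exact Or.inr ⟨h1, h2.tail hL⟩
      · subst hbv; subst hcu
        rcases ih with h1 | ⟨h1, h2⟩
        · exact Or.inr ⟨h1, Relation.ReflTransGen.refl⟩
        · exact Or.inr ⟨h1, Relation.ReflTransGen.refl⟩
  -- the finite set of terms occurring in F
  set T : Finset (Term V) := F.image Comp.lhs ∪ F.image Comp.rhs with hT
  have hoccT : ∀ t : Term V, t ∈ T ↔ TermOccurs F t := by
    intro t
    simp only [hT, Finset.mem_union, Finset.mem_image, TermOccurs]
    constructor
    · rintro (⟨a, ha, e⟩ | ⟨a, ha, e⟩)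
      · exact ⟨a, ha, Or.inl e⟩
      · exact ⟨a, ha, Or.inr e⟩
    · rintro ⟨a, ha, e | e⟩
      · exact Or.inl ⟨a, ha, e⟩
      · exact Or.inr ⟨a, ha, e⟩
  -- the finite set of constants occurring in F
  set C : Finset ℝ := T.biUnion
    (fun t => match t with | Term.const c => ({c} : Finset ℝ) | _ => (∅ : Finset ℝ)) with hC
  have hCmem : ∀ c : ℝ, c ∈ C ↔ Term.const c ∈ T := by
    intro c
    simp only [hC, Finset.mem_biUnion]
    constructor
    · rintro ⟨t, ht, hc⟩
      cases t with
      | var x => simp at hc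
      | const c0 =>
        simp only [Finset.mem_singleton] at hc
        subst hc; exact ht
    · intro h
      exact ⟨Term.const c, h, Finset.mem_singleton_self c⟩
  have hCocc : ∀ c : ℝ, c ∈ C → ConstOccurs F c := by
    intro c hc
    exact (hoccT (Term.const c)).1 ((hCmem c).1 hc)
  -- applying exists_val
  have hCdown : ∀ c ∈ C, ∀ c' ∈ C, c < c' →
      ¬ Relation.ReflTransGen (fun a b => Link (Fplus F) a b ∨ (a = v ∧ b = u))
        (Term.const c') (Term.const c) := by
    intro c hc c' hc' hcc hR'
    have hlkFp : (⟨Rel.lt, Term.const c, Term.const c'⟩ : Comp V) ∈ Fplus F :=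
      Set.mem_union_right _ ⟨c, c', hcc, hCocc c hc, hCocc c' hc', rfl⟩
    have hlk : Link (Fplus F) (Term.const c) (Term.const c') := Or.inr (Or.inl hlkFp)
    rcases hdec _ _ hR' with h | ⟨h1, h2⟩
    · have := rstar_eval F σ₀ hσ₀ _ _ h
      simp only [Term.eval] at this
      linarith
    · exact hnuv (h2.trans ((Relation.ReflTransGen.single hlk).trans h1))
  obtain ⟨val, hpin, hmono, hinj⟩ := exists_val T
    (Relation.ReflTransGen (fun a b => Link (Fplus F) a b ∨ (a = v ∧ b = u)))
    (fun a => Relation.ReflTransGen.refl)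
    (fun a b c h1 h2 => h1.trans h2)
    C Term.const
    (fun c hc => (hCmem c).1 hc)
    (fun c hc c' hc' hcc => Relation.ReflTransGen.single (Or.inl (Or.inr (Or.inl
      (Set.mem_union_right _ ⟨c, c', hcc, hCocc c hc, hCocc c' hc', rfl⟩)))))
    hCdown
  -- the new assignment
  set σ : V → ℝ := fun x => val (Term.var x) with hσ
  have heval : ∀ t ∈ T, Term.eval σ t = val t := by
    intro t ht
    cases t with
    | var x => rfl
    | const c => exact (hpin c ((hCmem c).2 ht)).symm
  have huT : u ∈ T := (hoccT u).2 hu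
  have hvT : v ∈ T := (hoccT v).2 hv
  -- σ satisfies F
  have hS : Sat F σ := by
    intro a ha
    have hsT : a.lhs ∈ T := (hoccT _).2 ⟨a, ha, Or.inl rfl⟩
    have htT : a.rhs ∈ T := (hoccT _).2 ⟨a, ha, Or.inr rfl⟩
    obtain ⟨rel, s, t⟩ := a
    simp only at hsT htT
    have hFp : ∀ b : Comp V, b ∈ F → b ∈ Fplus F :=
      fun b hb => Set.mem_union_left _ (Finset.mem_coe.2 hb)
    cases rel with
    | le =>
      have hlk : Link (Fplus F) s t := Or.inl (hFp _ ha)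
      show s.eval σ ≤ t.eval σ
      rw [heval s hsT, heval t htT]
      exact hmono s hsT t htT (Relation.ReflTransGen.single (Or.inl hlk))
    | lt =>
      have hlk : Link (Fplus F) s t := Or.inr (Or.inl (hFp _ ha))
      have h1 : val s ≤ val t :=
        hmono s hsT t htT (Relation.ReflTransGen.single (Or.inl hlk))
      have hne : val s ≠ val t := by
        intro he
        obtain ⟨-, h2⟩ := hinj s hsT t htT he
        rcases hdec _ _ h2 with h3 | ⟨h3, h4⟩
        · have h5 := rstar_eval F σ₀ hσ₀ _ _ h3
          have h6 : s.eval σ₀ < t.eval σ₀ := hσ₀ _ ha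
          linarith
        · exact hnuv (h4.trans ((Relation.ReflTransGen.single hlk).trans h3))
      show s.eval σ < t.eval σ
      rw [heval s hsT, heval t htT]
      exact lt_of_le_of_ne h1 hne
    | eq =>
      have hlkst : Link (Fplus F) s t := Or.inr (Or.inr (Or.inl (hFp _ ha)))
      have hlkts : Link (Fplus F) t s := Or.inr (Or.inr (Or.inr (hFp _ ha)))
      show s.eval σ = t.eval σ
      rw [heval s hsT, heval t htT]
      exact le_antisymm
        (hmono s hsT t htT (Relation.ReflTransGen.single (Or.inl hlkst)))
        (hmono t htT s hsT (Relation.ReflTransGen.single (Or.inl hlkts)))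
    | ne =>
      have hne : val s ≠ val t := by
        intro he
        obtain ⟨h2, h3⟩ := hinj s hsT t htT he
        have h6 : s.eval σ₀ ≠ t.eval σ₀ := hσ₀ _ ha
        rcases hdec _ _ h2 with h4 | ⟨h4, h5⟩
        · rcases hdec _ _ h3 with h7 | ⟨h7, h8⟩
          · have g1 := rstar_eval F σ₀ hσ₀ _ _ h4
            have g2 := rstar_eval F σ₀ hσ₀ _ _ h7
            exact h6 (le_antisymm g1 g2)
          · exact hnuv (h8.trans (h4.trans h7))
        · rcases hdec _ _ h3 with h7 | ⟨h7, h8⟩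
          · exact hnuv (h5.trans (h7.trans h4))
          · exact hnuv (h8.trans h4)
      show s.eval σ ≠ t.eval σ
      rw [heval s hsT, heval t htT]
      exact hne
  -- the contradiction
  have h1 : val u ≤ val v := by
    have := hent σ hS
    rwa [heval u huT, heval v hvT] at this
  have h2 : val v ≤ val u :=
    hmono v hvT u huT (Relation.ReflTransGen.single (Or.inr ⟨rfl, rfl⟩))
  obtain ⟨h4, -⟩ := hinj u huT v hvT (le_antisymm h1 h2)
  rcases hdec _ _ h4 with h5 | ⟨h5, -⟩
  · exact hnuv h5
  · exact hnuv h5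

end QC
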